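/- The extended simulation map is stable: f_I(R_i) ⊆ R_{i+1} for all i ∈ {1,...,n}, f_I(R_0) ⊆ R_1, and f_I(R_{n+1}) ⊆ R_{n+1}. -/

import Mathlib

noncomputable section

def pp (n : ℕ) : ℕ := Nat.clog 2 (n + 2)
def ww (B : ℕ) : ℕ := Nat.clog 2 (B + 2)
def qq (n B : ℕ) : ℕ := pp n + ww B + 1

def tp (n : ℕ) : ℝ := (2 : ℝ) ^ (-(pp n : ℤ))
def tp1 (n : ℕ) : ℝ := (2 : ℝ) ^ (-(pp n : ℤ) - 1)
def tq (n B : ℕ) : ℝ := (2 : ℝ) ^ (-(qq n B : ℤ))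
def bI (k : ℤ) : ℝ := (5 : ℝ) ^ (-k)

def TI (n B : ℕ) (A : ℕ → ℕ) (c : ℕ × ℕ × (ℕ → ℕ)) : ℕ × ℕ × (ℕ → ℕ) :=
  if c.1 = n + 1 then c
  else (c.1 + 1, min (B + 1) (c.2.1 + c.2.2 c.1 * A c.1), c.2.2)

def enc (n B : ℕ) (c : ℕ × ℕ × (ℕ → ℕ)) : ℝ × ℝ :=
  ((c.1 : ℝ) * tp n + (c.2.1 : ℝ) * tq n B,
   bI ((n : ℤ) + 1) + ∑ j ∈ Finset.Icc c.1 n, ((3 * c.2.2 j + 1 : ℕ) : ℝ) * bI (j : ℤ))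

def inR0 (n : ℕ) (x : ℝ × ℝ) : Prop :=
  0 ≤ x.1 ∧ x.1 ≤ tp1 n ∧ 0 ≤ x.2 ∧ x.2 ≤ 1

def inRi (n i : ℕ) (x : ℝ × ℝ) : Prop :=
  (i : ℝ) * tp n ≤ x.1 ∧ x.1 ≤ (i : ℝ) * tp n + tp1 n ∧ 0 ≤ x.2 ∧ x.2 ≤ bI ((i : ℤ) - 1)

def inRia (n i α : ℕ) (x : ℝ × ℝ) : Prop :=
  (i : ℝ) * tp n ≤ x.1 ∧ x.1 ≤ (i : ℝ) * tp n + tp1 n ∧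
    (α : ℝ) * bI (i : ℤ) ≤ x.2 ∧ x.2 ≤ ((α : ℝ) + 1) * bI (i : ℤ)

def in4lin (n B : ℕ) (A : ℕ → ℕ) (i : ℕ) (x : ℝ × ℝ) : Prop :=
  inRia n i 4 x ∧ x.1 ≤ (i : ℝ) * tp n + ((B : ℝ) + 1 - (A i : ℝ)) * tq n B

def in4sat (n B : ℕ) (A : ℕ → ℕ) (i : ℕ) (x : ℝ × ℝ) : Prop :=
  inRia n i 4 x ∧ (i : ℝ) * tp n + ((B : ℝ) + 1 - (A i : ℝ)) * tq n B ≤ x.1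

def in3lin (n B : ℕ) (A : ℕ → ℕ) (i : ℕ) (x : ℝ × ℝ) : Prop :=
  inRia n i 3 x ∧
    (x.2 * (5 : ℝ) ^ (i : ℤ) - 3) * (tp1 n - ((B : ℝ) + 1 - (A i : ℝ)) * tq n B) ≤
      tp1 n + (i : ℝ) * tp n - x.1

def in3sat (n B : ℕ) (A : ℕ → ℕ) (i : ℕ) (x : ℝ × ℝ) : Prop :=
  inRia n i 3 x ∧
    tp1 n + (i : ℝ) * tp n - x.1 ≤
      (x.2 * (5 : ℝ) ^ (i : ℤ) - 3) * (tp1 n - ((B : ℝ) + 1 - (A i : ℝ)) * tq n B)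

open scoped Classical in
def fI (n B : ℕ) (A : ℕ → ℕ) (x : ℝ × ℝ) : ℝ × ℝ :=
  if inR0 n x then (tp n, x.2)
  else if inRi n (n + 1) x then x
  else if _h : ∃ i, 1 ≤ i ∧ i ≤ n ∧ inRia n i 0 x then (x.1 + tp n, 0)
  else if h : ∃ i, 1 ≤ i ∧ i ≤ n ∧ inRia n i 1 x then
    (x.1 + tp n, x.2 - bI (h.choose : ℤ))
  else if h : ∃ i, 1 ≤ i ∧ i ≤ n ∧ inRia n i 2 x then
    (x.1 + tp n, 3 * bI (h.choose : ℤ) - x.2)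
  else if h : ∃ i, 1 ≤ i ∧ i ≤ n ∧ in3lin n B A i x then
    (x.1 + tp n + (A h.choose : ℝ) * tq n B * (x.2 * (5 : ℝ) ^ (h.choose : ℤ) - 3), 0)
  else if h : ∃ i, 1 ≤ i ∧ i ≤ n ∧ in3sat n B A i x then
    (((h.choose : ℝ) + 3 / 2) * tp n -
      (x.2 * (5 : ℝ) ^ (h.choose : ℤ) - 3) * (tp1 n - ((B : ℝ) + 1) * tq n B), 0)
  else if h : ∃ i, 1 ≤ i ∧ i ≤ n ∧ in4lin n B A i x then
    (x.1 + tp n + (A h.choose : ℝ) * tq n B, x.2 - 4 * bI (h.choose : ℤ))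
  else if h : ∃ i, 1 ≤ i ∧ i ≤ n ∧ in4sat n B A i x then
    (((h.choose : ℝ) + 1) * tp n + ((B : ℝ) + 1) * tq n B, x.2 - 4 * bI (h.choose : ℤ))
  else x

def inRfin (n B : ℕ) (x : ℝ × ℝ) : Prop :=
  ((n : ℝ) + 1) * tp n + (B : ℝ) * tq n B - (2 : ℝ) ^ (-(qq n B : ℤ) - 1) ≤ x.1 ∧
  x.1 ≤ ((n : ℝ) + 1) * tp n + (B : ℝ) * tq n B ∧
  bI ((n : ℤ) + 1) ≤ x.2 ∧ x.2 ≤ 2 * bI ((n : ℤ) + 1)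

end

section Helpers

lemma tp_pos (n : ℕ) : 0 < tp n := by unfold tp; positivity

lemma tp1_eq (n : ℕ) : tp1 n = tp n / 2 := by
  unfold tp tp1
  rw [sub_eq_add_neg, zpow_add₀ (by norm_num : (2:ℝ) ≠ 0)]
  norm_num
  ring

lemma tq_pos (n B : ℕ) : 0 < tq n B := by unfold tq; positivity

lemma key_ineq (n B : ℕ) : ((B:ℝ)+1) * tq n B ≤ tp1 n := by
  have hw : ((B:ℝ)+2) ≤ (2:ℝ)^(ww B : ℤ) := by
    have h := Nat.le_pow_clog one_lt_two (B+2)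
    have : ((B+2 : ℕ) : ℝ) ≤ ((2 ^ Nat.clog 2 (B+2) : ℕ) : ℝ) := by exact_mod_cast h
    rw [zpow_natCast]
    unfold ww
    push_cast at this ⊢
    linarith
  have hq : tq n B = tp1 n * (2:ℝ)^(-(ww B : ℤ)) := by
    unfold tq tp1 qq
    rw [← zpow_add₀ (by norm_num : (2:ℝ) ≠ 0)]
    congr 1
  have hpos : (0:ℝ) < (2:ℝ)^(-(ww B : ℤ)) := by positivity
  have hmul : (2:ℝ)^(ww B : ℤ) * (2:ℝ)^(-(ww B : ℤ)) = 1 := by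
    rw [← zpow_add₀ (by norm_num : (2:ℝ) ≠ 0)]; norm_num
  have h1 : ((B:ℝ)+1) * (2:ℝ)^(-(ww B : ℤ)) ≤ 1 := by
    nlinarith [hpos, hmul, hw]
  have htp1 : 0 < tp1 n := by unfold tp1; positivity
  rw [hq]
  nlinarith [h1, htp1]

lemma bI_pos (k : ℤ) : 0 < bI k := by unfold bI; positivity

lemma bI_pred (i : ℕ) : bI ((i:ℤ) - 1) = 5 * bI i := by
  unfold bI
  rw [show -((i:ℤ)-1) = 1 + (-(i:ℤ)) by ring, zpow_add₀ (by norm_num : (5:ℝ) ≠ 0)]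
  norm_num

lemma bI_mul (i : ℕ) : bI (i:ℤ) * (5:ℝ)^(i:ℤ) = 1 := by
  unfold bI
  rw [← zpow_add₀ (by norm_num : (5:ℝ) ≠ 0)]
  norm_num

lemma idx_eq {n i j : ℕ} {x : ℝ} (h1 : (i:ℝ) * tp n ≤ x) (h2 : x ≤ (i:ℝ) * tp n + tp1 n)
    (h3 : (j:ℝ) * tp n ≤ x) (h4 : x ≤ (j:ℝ) * tp n + tp1 n) : j = i := by
  have hp := tp_pos n
  have ht := tp1_eq n
  have hij : (j:ℝ) < (i:ℝ) + 1 := by nlinarith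
  have hji : (i:ℝ) < (j:ℝ) + 1 := by nlinarith
  have h5 : j < i + 1 := by exact_mod_cast hij
  have h6 : i < j + 1 := by exact_mod_cast hji
  omega

end Helpers
lemma mem_next {n i : ℕ} {y : ℝ × ℝ} (h1 : ((i:ℝ)+1) * tp n ≤ y.1)
    (h2 : y.1 ≤ ((i:ℝ)+1) * tp n + tp1 n) (h3 : 0 ≤ y.2) (h4 : y.2 ≤ bI (i:ℤ)) :
    inRi n (i+1) y := by
  refine ⟨?_, ?_, h3, ?_⟩
  · push_cast; exact h1
  · push_cast; exact h2
  · rw [show ((i+1:ℕ):ℤ) - 1 = (i:ℤ) by push_cast; ring]; exact h4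

lemma no_band {n i α : ℕ} {x : ℝ × ℝ} (hx1 : (i:ℝ) * tp n ≤ x.1)
    (hx2 : x.1 ≤ (i:ℝ) * tp n + tp1 n) (hlt : ((α:ℝ)+1) * bI (i:ℤ) < x.2) :
    ¬ ∃ j, 1 ≤ j ∧ j ≤ n ∧ inRia n j α x := by
  rintro ⟨j, -, -, hj⟩
  have hji : j = i := idx_eq hx1 hx2 hj.1 hj.2.1
  subst hji
  exact absurd hj.2.2.2 (not_le.2 hlt)
set_option maxHeartbeats 2000000 in
theorem simulation_stable (n B : ℕ) (A : ℕ → ℕ) (hA : ∀ j, A j ≤ B) :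
    (∀ i, 1 ≤ i → i ≤ n → ∀ x, inRi n i x → inRi n (i + 1) (fI n B A x)) ∧
    (∀ x, inR0 n x → inRi n 1 (fI n B A x)) ∧
    (∀ x, inRi n (n + 1) x → inRi n (n + 1) (fI n B A x)) := by
  have hp := tp_pos n
  have ht := tp1_eq n
  have hq := tq_pos n B
  have hk := key_ineq n B
  refine ⟨?_, ?_, ?_⟩
  · -- main part
    intro i h1 hn x hx
    obtain ⟨hx1, hx2, hx3, hx4⟩ := hx
    rw [bI_pred] at hx4
    have hbp := bI_pos (i:ℤ)
    have hi1 : (1:ℝ) ≤ (i:ℝ) := by exact_mod_cast h1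
    have hin : (i:ℝ) ≤ (n:ℝ) := by exact_mod_cast hn
    have h0 : ¬ inR0 n x := by
      rintro ⟨-, hb, -, -⟩
      nlinarith [mul_nonneg (sub_nonneg.2 hi1) hp.le]
    have hn1 : ¬ inRi n (n+1) x := by
      rintro ⟨ha, -, -, -⟩
      push_cast at ha
      nlinarith [mul_nonneg (sub_nonneg.2 hin) hp.le]
    rw [fI, if_neg h0, if_neg hn1]
    rcases le_or_gt x.2 (bI (i:ℤ)) with hb0 | hb0
    · -- band 0
      have hE0 : ∃ j, 1 ≤ j ∧ j ≤ n ∧ inRia n j 0 x :=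
        ⟨i, h1, hn, hx1, hx2, by push_cast; linarith, by push_cast; linarith⟩
      rw [dif_pos hE0]
      exact mem_next (by dsimp only; nlinarith) (by dsimp only; nlinarith) le_rfl hbp.le
    · have hN0 : ¬ ∃ j, 1 ≤ j ∧ j ≤ n ∧ inRia n j 0 x :=
        no_band hx1 hx2 (by push_cast; linarith)
      rcases le_or_gt x.2 (2 * bI (i:ℤ)) with hb1 | hb1
      · -- band 1
        have hE1 : ∃ j, 1 ≤ j ∧ j ≤ n ∧ inRia n j 1 x :=
          ⟨i, h1, hn, hx1, hx2, by push_cast; linarith, by push_cast; linarith⟩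
        rw [dif_neg hN0, dif_pos hE1]
        have hspec := hE1.choose_spec
        have hce : hE1.choose = i := idx_eq hx1 hx2 hspec.2.2.1 hspec.2.2.2.1
        rw [hce]
        exact mem_next (by dsimp only; nlinarith) (by dsimp only; nlinarith) (by dsimp only; linarith)
          (by dsimp only; linarith)
      · have hN1 : ¬ ∃ j, 1 ≤ j ∧ j ≤ n ∧ inRia n j 1 x :=
          no_band hx1 hx2 (by push_cast; linarith)
        rcases le_or_gt x.2 (3 * bI (i:ℤ)) with hb2 | hb2
        · -- band 2
          have hE2 : ∃ j, 1 ≤ j ∧ j ≤ n ∧ inRia n j 2 x :=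
            ⟨i, h1, hn, hx1, hx2, by push_cast; linarith, by push_cast; linarith⟩
          rw [dif_neg hN0, dif_neg hN1, dif_pos hE2]
          have hspec := hE2.choose_spec
          have hce : hE2.choose = i := idx_eq hx1 hx2 hspec.2.2.1 hspec.2.2.2.1
          rw [hce]
          exact mem_next (by dsimp only; nlinarith) (by dsimp only; nlinarith) (by dsimp only; linarith)
            (by dsimp only; linarith)
        · have hN2 : ¬ ∃ j, 1 ≤ j ∧ j ≤ n ∧ inRia n j 2 x :=
            no_band hx1 hx2 (by push_cast; linarith)
          have hbm := bI_mul i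
          have hpow : (0:ℝ) < (5:ℝ)^(i:ℤ) := by positivity
          have hAn : (0:ℝ) ≤ (A i : ℝ) := Nat.cast_nonneg _
          have hAB : (A i : ℝ) ≤ (B : ℝ) := by exact_mod_cast hA i
          have hBn : (0:ℝ) ≤ (B : ℝ) := Nat.cast_nonneg _
          rcases le_or_gt x.2 (4 * bI (i:ℤ)) with hb3 | hb3
          · -- band 3
            have hRia3 : inRia n i 3 x :=
              ⟨hx1, hx2, by push_cast; linarith, by push_cast; linarith⟩
            have h3le : (3:ℝ) ≤ x.2 * (5:ℝ)^(i:ℤ) := by nlinarith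
            have h4ge : x.2 * (5:ℝ)^(i:ℤ) ≤ 4 := by nlinarith
            have hs0 : (0:ℝ) ≤ x.2 * (5:ℝ)^(i:ℤ) - 3 := by linarith
            have hs1 : x.2 * (5:ℝ)^(i:ℤ) - 3 ≤ 1 := by linarith
            have hu : (0:ℝ) ≤ tp1 n - ((B:ℝ)+1) * tq n B := by linarith
            rcases le_or_gt ((x.2 * (5:ℝ)^(i:ℤ) - 3) * (tp1 n - ((B:ℝ)+1-(A i:ℝ)) * tq n B))
                (tp1 n + (i:ℝ) * tp n - x.1) with hlin | hsat
            · -- 3lin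
              have hE : ∃ j, 1 ≤ j ∧ j ≤ n ∧ in3lin n B A j x := ⟨i, h1, hn, hRia3, hlin⟩
              rw [dif_neg hN0, dif_neg hN1, dif_neg hN2, dif_pos hE]
              have hspec := hE.choose_spec
              have hce : hE.choose = i := idx_eq hx1 hx2 hspec.2.2.1.1 hspec.2.2.1.2.1
              rw [hce]
              refine mem_next ?_ ?_ le_rfl hbp.le
              · dsimp only
                nlinarith [mul_nonneg (mul_nonneg hAn hq.le) hs0]
              · dsimp only
                nlinarith [mul_nonneg hs0 hu]
            · -- 3sat
              have hN3 : ¬ ∃ j, 1 ≤ j ∧ j ≤ n ∧ in3lin n B A j x := by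
                rintro ⟨j, -, -, hj⟩
                have hji : j = i := idx_eq hx1 hx2 hj.1.1 hj.1.2.1
                subst hji
                linarith [hj.2]
              have hE : ∃ j, 1 ≤ j ∧ j ≤ n ∧ in3sat n B A j x := ⟨i, h1, hn, hRia3, hsat.le⟩
              rw [dif_neg hN0, dif_neg hN1, dif_neg hN2, dif_neg hN3, dif_pos hE]
              have hspec := hE.choose_spec
              have hce : hE.choose = i := idx_eq hx1 hx2 hspec.2.2.1.1 hspec.2.2.1.2.1
              rw [hce]
              refine mem_next ?_ ?_ le_rfl hbp.le
              · dsimp only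
                nlinarith [mul_le_mul_of_nonneg_right hs1 hu,
                  mul_nonneg hs0 (mul_nonneg (by linarith : (0:ℝ) ≤ (B:ℝ)+1) hq.le)]
              · dsimp only
                nlinarith [mul_nonneg hs0 hu]
          · -- band 4
            have hN3 : ¬ ∃ j, 1 ≤ j ∧ j ≤ n ∧ in3lin n B A j x := by
              rintro ⟨j, -, -, hj⟩
              have hji : j = i := idx_eq hx1 hx2 hj.1.1 hj.1.2.1
              subst hji
              have := hj.1.2.2.2
              push_cast at this
              linarith
            have hN3' : ¬ ∃ j, 1 ≤ j ∧ j ≤ n ∧ in3sat n B A j x := by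
              rintro ⟨j, -, -, hj⟩
              have hji : j = i := idx_eq hx1 hx2 hj.1.1 hj.1.2.1
              subst hji
              have := hj.1.2.2.2
              push_cast at this
              linarith
            have hRia4 : inRia n i 4 x :=
              ⟨hx1, hx2, by push_cast; linarith, by push_cast; linarith⟩
            rcases le_or_gt x.1 ((i:ℝ) * tp n + ((B:ℝ)+1-(A i:ℝ)) * tq n B) with h4l | h4s
            · -- 4lin
              have hE : ∃ j, 1 ≤ j ∧ j ≤ n ∧ in4lin n B A j x := ⟨i, h1, hn, hRia4, h4l⟩
              rw [dif_neg hN0, dif_neg hN1, dif_neg hN2, dif_neg hN3, dif_neg hN3', dif_pos hE]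
              have hspec := hE.choose_spec
              have hce : hE.choose = i := idx_eq hx1 hx2 hspec.2.2.1.1 hspec.2.2.1.2.1
              rw [hce]
              refine mem_next ?_ ?_ ?_ ?_
              · dsimp only; nlinarith [mul_nonneg hAn hq.le]
              · dsimp only; nlinarith
              · dsimp only; linarith
              · dsimp only; linarith
            · -- 4sat
              have hN4 : ¬ ∃ j, 1 ≤ j ∧ j ≤ n ∧ in4lin n B A j x := by
                rintro ⟨j, -, -, hj⟩
                have hji : j = i := idx_eq hx1 hx2 hj.1.1 hj.1.2.1
                subst hji
                linarith [hj.2]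
              have hE : ∃ j, 1 ≤ j ∧ j ≤ n ∧ in4sat n B A j x := ⟨i, h1, hn, hRia4, h4s.le⟩
              rw [dif_neg hN0, dif_neg hN1, dif_neg hN2, dif_neg hN3, dif_neg hN3',
                dif_neg hN4, dif_pos hE]
              have hspec := hE.choose_spec
              have hce : hE.choose = i := idx_eq hx1 hx2 hspec.2.2.1.1 hspec.2.2.1.2.1
              rw [hce]
              refine mem_next ?_ ?_ ?_ ?_
              · dsimp only; nlinarith [mul_nonneg (by linarith : (0:ℝ) ≤ (B:ℝ)+1) hq.le]
              · dsimp only; nlinarith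
              · dsimp only; linarith
              · dsimp only; linarith
  · -- R0 part
    intro x hx
    rw [fI, if_pos hx]
    obtain ⟨-, -, hy1, hy2⟩ := hx
    refine ⟨?_, ?_, hy1, ?_⟩
    · dsimp only; push_cast; linarith [tp1_eq n, tp_pos n]
    · dsimp only; push_cast; nlinarith [tp_pos n, tp1_eq n]
    · dsimp only
      rw [show ((1:ℕ):ℤ) - 1 = (0:ℤ) by norm_num, show bI 0 = 1 by norm_num [bI]]
      exact hy2
  · -- R_{n+1} part
    intro x hx
    have h0 : ¬ inR0 n x := by
      rintro ⟨-, hb, -, -⟩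
      obtain ⟨ha, -, -, -⟩ := hx
      push_cast at ha
      nlinarith [tp_pos n, tp1_eq n, mul_nonneg (n.cast_nonneg) (tp_pos n).le]
    rw [fI, if_neg h0, if_pos hx]
    exact hx
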